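/- Consider the heterogeneous SAIS mean-field dynamics on a connected simple undirected graph with adjacency matrix A. Suppose p, q : [0,∞) → ℝⁿ satisfy, for all t ≥ 0 and all i, the ODEs ṗ_i = β_i(1−p_i−q_i)Σ_j a_ij p_j + r_i β_i q_i Σ_j a_ij p_j − δ_i p_i and q̇_i = κ_i(1−p_i−q_i)Σ_j a_ij p_j − r_i β_i q_i Σ_j a_ij p_j, with 0 ≤ p_i(t), 0 ≤ q_i(t), p_i(t)+q_i(t) ≤ 1. If the symmetric matrix (LB)^{1/2} A (LB)^{1/2} − MD is negative definite (equivalently, the largest eigenvalue of LBA − MD is negative), then lim_{t→∞} p_i(t) = 0 for every i. -/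

import Mathlib

open Matrix Filter

private lemma decay_bound {f f' : ℝ → ℝ}
    (hf : ∀ t, 0 ≤ t → HasDerivWithinAt f (f' t) (Set.Ici 0) t)
    {a b C : ℝ} (ha : 0 ≤ a) (hab : a ≤ b)
    (hC : ∀ t, a ≤ t → t ≤ b → f' t ≤ C) :
    f b - f a ≤ C * (b - a) := by
  have hsub : Set.Icc a b ⊆ Set.Ici 0 := fun x hx => le_trans ha hx.1
  have hda : ∀ x ∈ Set.Ioo a b, HasDerivAt f (f' x) x := by
    intro x hx
    have h0 : (0:ℝ) < x := lt_of_le_of_lt ha hx.1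
    exact (hf x h0.le).hasDerivAt (Ici_mem_nhds h0)
  have hcont : ContinuousOn f (Set.Icc a b) :=
    fun x hx => ((hf x (hsub hx)).continuousWithinAt).mono hsub
  have hdiff : DifferentiableOn ℝ f (interior (Set.Icc a b)) := by
    rw [interior_Icc]
    exact fun x hx => (hda x hx).differentiableAt.differentiableWithinAt
  have hder : ∀ x ∈ interior (Set.Icc a b), deriv f x ≤ C := by
    rw [interior_Icc]
    intro x hx
    rw [(hda x hx).deriv]
    exact hC x hx.1.le hx.2.le
  exact (convex_Icc a b).image_sub_le_mul_sub_of_deriv_le hcont hdiff hder a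
    (Set.left_mem_Icc.2 hab) b (Set.right_mem_Icc.2 hab) hab

private lemma exists_nonneg_sol {n : ℕ} (Mm : Matrix (Fin n) (Fin n) ℝ)
    (hoff : ∀ i j, i ≠ j → Mm i j ≤ 0)
    (hpos : ∀ x : Fin n → ℝ, x ≠ 0 → 0 < ∑ i, x i * ∑ j, Mm i j * x j) :
    ∃ u : Fin n → ℝ, (∀ i, 0 ≤ u i) ∧ ∀ j, ∑ i, Mm j i * u i = 1 := by
  have hquad : ∀ x : Fin n → ℝ, x ⬝ᵥ (Mm *ᵥ x) = ∑ i, x i * ∑ j, Mm i j * x j := by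
    intro x
    simp [dotProduct, Matrix.mulVec]
  have hinj : Function.Injective Mm.mulVecLin := by
    rw [← LinearMap.ker_eq_bot, LinearMap.ker_eq_bot']
    intro x hx
    by_contra hx0
    have h1 : x ⬝ᵥ (Mm *ᵥ x) = 0 := by
      rw [show Mm *ᵥ x = 0 from hx]
      simp [dotProduct]
    rw [hquad] at h1
    exact absurd h1 (ne_of_gt (hpos x hx0))
  obtain ⟨u, hu0⟩ := (LinearMap.injective_iff_surjective.mp hinj) (fun _ => (1:ℝ))
  have hu : ∀ j, ∑ i, Mm j i * u i = 1 := by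
    intro j
    have := congrFun hu0 j
    simpa [Matrix.mulVecLin_apply, Matrix.mulVec, dotProduct] using this
  refine ⟨u, ?_, hu⟩
  by_contra hcon
  push_neg at hcon
  obtain ⟨i0, hi0⟩ := hcon
  set v : Fin n → ℝ := fun i => max (-(u i)) 0 with hvdef
  set P : Fin n → ℝ := fun i => max (u i) 0 with hPdef
  have hv_nonneg : ∀ i, 0 ≤ v i := fun i => le_max_right _ _
  have hP_nonneg : ∀ i, 0 ≤ P i := fun i => le_max_right _ _
  have hvP : ∀ i, v i * P i = 0 := by
    intro i
    rcases le_total (u i) 0 with h | h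
    · have : P i = 0 := max_eq_right (by linarith)
      rw [this, mul_zero]
    · have : v i = 0 := max_eq_right (by linarith)
      rw [this, zero_mul]
  have huPv : ∀ i, u i = P i - v i := by
    intro i
    rcases le_total (u i) 0 with h | h
    · rw [hvdef, hPdef]
      simp only []
      rw [max_eq_right h, max_eq_left (by linarith)]
      ring
    · rw [hvdef, hPdef]
      simp only []
      rw [max_eq_left h, max_eq_right (by linarith)]
      ring
  have hvne : v ≠ 0 := by
    intro h
    have := congrFun h i0
    simp only [hvdef, Pi.zero_apply] at this
    have : -(u i0) ≤ 0 := le_of_max_le_left (le_of_eq this)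
    linarith
  have eq1 : (∑ i, v i * ∑ j, Mm i j * P j) - (∑ i, v i * ∑ j, Mm i j * v j) = ∑ i, v i := by
    rw [← Finset.sum_sub_distrib]
    refine Finset.sum_congr rfl fun i _ => ?_
    rw [← mul_sub, ← Finset.sum_sub_distrib]
    have : ∑ j, (Mm i j * P j - Mm i j * v j) = ∑ j, Mm i j * u j := by
      refine Finset.sum_congr rfl fun j _ => ?_
      rw [huPv j]; ring
    rw [this, hu i, mul_one]
  have hT1 : (∑ i, v i * ∑ j, Mm i j * P j) ≤ 0 := by
    refine Finset.sum_nonpos fun i _ => ?_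
    rw [Finset.mul_sum]
    refine Finset.sum_nonpos fun j _ => ?_
    rcases eq_or_ne i j with rfl | hij
    · have : v i * (Mm i i * P i) = Mm i i * (v i * P i) := by ring
      rw [this, hvP i, mul_zero]
    · have h1 : Mm i j * P j ≤ 0 := mul_nonpos_of_nonpos_of_nonneg (hoff i j hij) (hP_nonneg j)
      exact mul_nonpos_of_nonneg_of_nonpos (hv_nonneg i) h1
  have hT2 : 0 < ∑ i, v i * ∑ j, Mm i j * v j := hpos v hvne
  have hsv : 0 ≤ ∑ i, v i := Finset.sum_nonneg fun i _ => hv_nonneg i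
  linarith
theorem stmt_0 {n : ℕ} (G : SimpleGraph (Fin n)) [DecidableRel G.Adj]
    (hconn : G.Connected)
    (β δ κ r : Fin n → ℝ)
    (hβ : ∀ i, 0 < β i) (hδ : ∀ i, 0 < δ i) (hκ : ∀ i, 0 < κ i)
    (hr : ∀ i, 0 < r i ∧ r i < 1)
    (p q : ℝ → Fin n → ℝ)
    (hbound : ∀ t, 0 ≤ t → ∀ i, 0 ≤ p t i ∧ 0 ≤ q t i ∧ p t i + q t i ≤ 1)
    (hp : ∀ t, 0 ≤ t → ∀ i,
      HasDerivWithinAt (fun s => p s i)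
        (β i * (1 - p t i - q t i) * (∑ j, G.adjMatrix ℝ i j * p t j)
          + r i * β i * q t i * (∑ j, G.adjMatrix ℝ i j * p t j)
          - δ i * p t i) (Set.Ici 0) t)
    (hq : ∀ t, 0 ≤ t → ∀ i,
      HasDerivWithinAt (fun s => q s i)
        (κ i * (1 - p t i - q t i) * (∑ j, G.adjMatrix ℝ i j * p t j)
          - r i * β i * q t i * (∑ j, G.adjMatrix ℝ i j * p t j)) (Set.Ici 0) t)
    (hND : ∀ x : Fin n → ℝ, x ≠ 0 →
      x ⬝ᵥ ((Matrix.diagonal (fun i => Real.sqrt ((r i * (κ i / β i) + r i) * β i))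
            * G.adjMatrix ℝ
            * Matrix.diagonal (fun i => Real.sqrt ((r i * (κ i / β i) + r i) * β i))
          - Matrix.diagonal (fun i => κ i / β i + r i) * Matrix.diagonal δ) *ᵥ x) < 0) :
    ∀ i, Tendsto (fun t => p t i) atTop (nhds 0) := by
  intro i0
  set A : Matrix (Fin n) (Fin n) ℝ := G.adjMatrix ℝ with hAdef
  set s : Fin n → ℝ := fun i => Real.sqrt ((r i * (κ i / β i) + r i) * β i) with hsdef
  set m : Fin n → ℝ := fun i => κ i / β i + r i with hmdef
  have hA_nonneg : ∀ i j, 0 ≤ A i j := by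
    intro i j; rw [hAdef]; simp only [SimpleGraph.adjMatrix_apply]
    split <;> norm_num
  have hA_symm : ∀ i j, A i j = A j i := by
    intro i j; rw [hAdef]; simp only [SimpleGraph.adjMatrix_apply]
    simp [G.adj_comm i j]
  have hA_diag : ∀ i, A i i = 0 := by
    intro i; rw [hAdef]; simp
  have hs_arg_pos : ∀ i, 0 < (r i * (κ i / β i) + r i) * β i := by
    intro i
    have h1 : 0 < κ i / β i := div_pos (hκ i) (hβ i)
    have h2 := (hr i).1
    have h3 : 0 < r i * (κ i / β i) + r i := by nlinarith
    exact mul_pos h3 (hβ i)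
  have hs_pos : ∀ i, 0 < s i := fun i => Real.sqrt_pos.mpr (hs_arg_pos i)
  have hs_sq : ∀ i, s i ^ 2 = (r i * (κ i / β i) + r i) * β i :=
    fun i => Real.sq_sqrt (hs_arg_pos i).le
  have hm_pos : ∀ i, 0 < m i := by
    intro i
    have h1 : 0 < κ i / β i := div_pos (hκ i) (hβ i)
    have h2 := (hr i).1
    show 0 < κ i / β i + r i
    linarith
  set Mm : Matrix (Fin n) (Fin n) ℝ :=
    Matrix.of (fun i j => (if i = j then m i * δ i else 0) - s i * A i j * s j) with hMmdef
  have hMm_apply : ∀ i j, Mm i j = (if i = j then m i * δ i else 0) - s i * A i j * s j :=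
    fun i j => rfl
  have hoff : ∀ i j, i ≠ j → Mm i j ≤ 0 := by
    intro i j hij
    rw [hMm_apply, if_neg hij, zero_sub, neg_nonpos]
    exact mul_nonneg (mul_nonneg (hs_pos i).le (hA_nonneg i j)) (hs_pos j).le
  have hNM : (diagonal s * A * diagonal s - diagonal m * diagonal δ) = -Mm := by
    ext i j
    rw [Matrix.sub_apply, Matrix.mul_diagonal, Matrix.diagonal_mul,
      Matrix.diagonal_mul_diagonal, Matrix.diagonal_apply, Matrix.neg_apply, hMm_apply]
    ring
  have hpos : ∀ x : Fin n → ℝ, x ≠ 0 → 0 < ∑ i, x i * ∑ j, Mm i j * x j := by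
    intro x hx
    have h := hND x hx
    rw [hNM, Matrix.neg_mulVec, dotProduct_neg, neg_neg_iff_pos] at h
    calc (0:ℝ) < x ⬝ᵥ (Mm *ᵥ x) := h
      _ = ∑ i, x i * ∑ j, Mm i j * x j := by simp [dotProduct, Matrix.mulVec]
  obtain ⟨u, hu_nonneg, hu⟩ := exists_nonneg_sol Mm hoff hpos
  -- the weights
  set c : Fin n → ℝ := fun i => u i / s i with hcdef
  have hc_nonneg : ∀ i, 0 ≤ c i := fun i => div_nonneg (hu_nonneg i) (hs_pos i).le
  -- Lyapunov function
  set Φ : ℝ → ℝ := fun t => ∑ i, c i * (m i * p t i - (1 - r i) * q t i) with hΦdef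
  set D : ℝ → ℝ := fun t => ∑ i, c i *
      (m i * (β i * (1 - p t i - q t i) * (∑ j, A i j * p t j)
          + r i * β i * q t i * (∑ j, A i j * p t j) - δ i * p t i)
        - (1 - r i) * (κ i * (1 - p t i - q t i) * (∑ j, A i j * p t j)
          - r i * β i * q t i * (∑ j, A i j * p t j))) with hDdef
  have hΦ' : ∀ t, 0 ≤ t → HasDerivWithinAt Φ (D t) (Set.Ici 0) t := by
    intro t ht
    exact HasDerivWithinAt.fun_sum fun i _ =>
      (((hp t ht i).const_mul (m i)).sub ((hq t ht i).const_mul (1 - r i))).const_mul (c i)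
  have hw_nonneg : ∀ t, 0 ≤ t → ∀ i, 0 ≤ ∑ j, A i j * p t j := fun t ht i =>
    Finset.sum_nonneg fun j _ => mul_nonneg (hA_nonneg i j) (hbound t ht j).1
  have hD : ∀ t, 0 ≤ t → D t ≤ -∑ j, p t j / s j := by
    intro t ht
    have key : ∀ i, m i * (β i * (1 - p t i - q t i) * (∑ j, A i j * p t j)
            + r i * β i * q t i * (∑ j, A i j * p t j) - δ i * p t i)
          - (1 - r i) * (κ i * (1 - p t i - q t i) * (∑ j, A i j * p t j)
            - r i * β i * q t i * (∑ j, A i j * p t j))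
        = s i ^ 2 * (1 - p t i) * (∑ j, A i j * p t j) - m i * δ i * p t i := by
      intro i
      have hbne : β i ≠ 0 := (hβ i).ne'
      rw [hs_sq i, hmdef]
      field_simp
      ring
    have hDt_eq : D t = ∑ i, c i *
        (s i ^ 2 * (1 - p t i) * (∑ j, A i j * p t j) - m i * δ i * p t i) := by
      rw [hDdef]
      exact Finset.sum_congr rfl fun i _ => by rw [key i]
    have step2 : D t ≤ ∑ i, c i * (s i ^ 2 * (∑ j, A i j * p t j) - m i * δ i * p t i) := by
      rw [hDt_eq]
      refine Finset.sum_le_sum fun i _ => ?_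
      refine mul_le_mul_of_nonneg_left ?_ (hc_nonneg i)
      have h1 : 0 ≤ s i ^ 2 * p t i * (∑ j, A i j * p t j) :=
        mul_nonneg (mul_nonneg (sq_nonneg _) (hbound t ht i).1) (hw_nonneg t ht i)
      nlinarith
    have hMmrow : ∀ j, ∑ i, Mm j i * u i = m j * δ j * u j - s j * ∑ i, A j i * (s i * u i) := by
      intro j
      simp only [hMm_apply, sub_mul, ite_mul, zero_mul, Finset.sum_sub_distrib,
        Finset.sum_ite_eq, Finset.mem_univ, if_true, Finset.mul_sum]
      congr 1
      exact Finset.sum_congr rfl fun i _ => by ring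
    have hrow : ∀ j, ∑ i, A j i * (s i * u i) = (m j * δ j * u j - 1) / s j := by
      intro j
      have h1 := hu j
      rw [hMmrow j] at h1
      rw [eq_div_iff (hs_pos j).ne']
      linarith [h1, mul_comm (s j) (∑ i, A j i * (s i * u i))]
    have step3 : ∑ i, c i * (s i ^ 2 * (∑ j, A i j * p t j) - m i * δ i * p t i)
        = -∑ j, p t j / s j := by
      have e1 : ∀ i, c i * (s i ^ 2 * (∑ j, A i j * p t j) - m i * δ i * p t i)
          = (∑ j, (s i * u i) * (A i j * p t j)) - u i / s i * (m i * δ i * p t i) := by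
        intro i
        rw [hcdef]
        simp only []
        rw [← Finset.mul_sum]
        have hsne : s i ≠ 0 := (hs_pos i).ne'
        field_simp
      calc ∑ i, c i * (s i ^ 2 * (∑ j, A i j * p t j) - m i * δ i * p t i)
          = (∑ i, ∑ j, (s i * u i) * (A i j * p t j))
            - ∑ i, u i / s i * (m i * δ i * p t i) := by
            rw [← Finset.sum_sub_distrib]
            exact Finset.sum_congr rfl fun i _ => e1 i
        _ = (∑ j, (∑ i, A j i * (s i * u i)) * p t j)
            - ∑ j, u j / s j * (m j * δ j * p t j) := by
            rw [Finset.sum_comm]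
            congr 1
            refine Finset.sum_congr rfl fun j _ => ?_
            rw [Finset.sum_mul]
            refine Finset.sum_congr rfl fun i _ => ?_
            rw [hA_symm i j]
            ring
        _ = ∑ j, (((m j * δ j * u j - 1) / s j) * p t j - u j / s j * (m j * δ j * p t j)) := by
            rw [← Finset.sum_sub_distrib]
            exact Finset.sum_congr rfl fun j _ => by rw [hrow j]
        _ = ∑ j, -(p t j / s j) := by
            refine Finset.sum_congr rfl fun j _ => ?_
            have hsne : s j ≠ 0 := (hs_pos j).ne'
            field_simp
            ring
        _ = -∑ j, p t j / s j := by rw [Finset.sum_neg_distrib]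
    linarith [step2, step3.le, step3.ge]
  -- monotonicity of the Lyapunov function
  have hΦmono : ∀ a b, 0 ≤ a → a ≤ b → Φ b ≤ Φ a := by
    intro a b ha hab
    have h := decay_bound hΦ' ha hab (C := 0) ?_
    · linarith
    · intro t h1 h2
      have ht : 0 ≤ t := le_trans ha h1
      refine le_trans (hD t ht) ?_
      rw [neg_nonpos]
      exact Finset.sum_nonneg fun j _ => div_nonneg (hbound t ht j).1 (hs_pos j).le
  set K : ℝ := ∑ i, c i * (1 - r i) with hK
  have hΦlow : ∀ t, 0 ≤ t → -K ≤ Φ t := by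
    intro t ht
    rw [hK, ← Finset.sum_neg_distrib]
    refine Finset.sum_le_sum fun i _ => ?_
    obtain ⟨hp0, hq0, hpq⟩ := hbound t ht i
    have h1 : 0 ≤ c i * (m i * p t i) :=
      mul_nonneg (hc_nonneg i) (mul_nonneg (hm_pos i).le hp0)
    have h2 : 0 ≤ c i * ((1 - r i) * (1 - q t i)) :=
      mul_nonneg (hc_nonneg i) (mul_nonneg (by linarith [(hr i).2]) (by linarith))
    nlinarith
  -- one-sided Lipschitz bound on p
  have hplow : ∀ a b, 0 ≤ a → a ≤ b → p a i0 - δ i0 * (b - a) ≤ p b i0 := by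
    intro a b ha hab
    have h := decay_bound (f := fun t => -(p t i0)) (fun t ht => (hp t ht i0).neg)
      ha hab (C := δ i0) ?_
    · have h' : -p b i0 - -p a i0 ≤ δ i0 * (b - a) := h
      linarith
    · intro t h1 h2
      have ht : 0 ≤ t := le_trans ha h1
      obtain ⟨hp0, hq0, hpq⟩ := hbound t ht i0
      have hw := hw_nonneg t ht i0
      have ha1 : 0 ≤ β i0 * (1 - p t i0 - q t i0) * (∑ j, A i0 j * p t j) :=
        mul_nonneg (mul_nonneg (hβ i0).le (by linarith)) hw
      have ha2 : 0 ≤ r i0 * β i0 * q t i0 * (∑ j, A i0 j * p t j) :=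
        mul_nonneg (mul_nonneg (mul_nonneg (hr i0).1.le (hβ i0).le) hq0) hw
      have ha3 : δ i0 * p t i0 ≤ δ i0 := by nlinarith [hδ i0]
      linarith
  -- final contradiction argument
  rw [Metric.tendsto_atTop]
  by_contra hcon
  push_neg at hcon
  obtain ⟨ε, hε, H⟩ := hcon
  set h : ℝ := ε / (2 * δ i0) with hh
  have hhpos : 0 < h := div_pos hε (by linarith [hδ i0])
  set η : ℝ := ε / (2 * s i0) * h with hηdef
  have hηpos : 0 < η := mul_pos (div_pos hε (by linarith [hs_pos i0])) hhpos
  have hdrop : ∀ t, 0 ≤ t → ε ≤ p t i0 → Φ (t + h) ≤ Φ t - η := by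
    intro t ht hpt
    have hb := decay_bound hΦ' ht (by linarith : t ≤ t + h) (C := -(ε / (2 * s i0))) ?_
    · rw [hηdef]
      have : t + h - t = h := by ring
      rw [this] at hb
      linarith
    · intro t' h1 h2
      have ht' : 0 ≤ t' := le_trans ht h1
      have hdh : δ i0 * h = ε / 2 := by
        have hd0 : δ i0 ≠ 0 := (hδ i0).ne'
        rw [hh]
        field_simp
      have hp' : ε / 2 ≤ p t' i0 := by
        have hlo := hplow t t' ht h1
        have hd : δ i0 * (t' - t) ≤ δ i0 * h :=
          mul_le_mul_of_nonneg_left (by linarith) (hδ i0).le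
        linarith
      refine le_trans (hD t' ht') ?_
      have hsingle : p t' i0 / s i0 ≤ ∑ j, p t' j / s j :=
        Finset.single_le_sum (fun j _ => div_nonneg (hbound t' ht' j).1 (hs_pos j).le)
          (Finset.mem_univ i0)
      have h3 : ε / (2 * s i0) ≤ p t' i0 / s i0 := by
        have e : ε / (2 * s i0) = (ε / 2) / s i0 := by ring
        rw [e]
        exact div_le_div_of_nonneg_right hp' (hs_pos i0).le
      linarith
  choose T hT1 hT2 using H
  have hpT : ∀ N : ℝ, 0 ≤ N → ε ≤ p (T N) i0 := by
    intro N hN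
    have h0 : 0 ≤ T N := le_trans hN (hT1 N)
    have := hT2 N
    rwa [Real.dist_eq, sub_zero, abs_of_nonneg (hbound _ h0 i0).1] at this
  set g : ℕ → ℝ := fun k => Nat.rec (T 0) (fun _ prev => T (prev + h)) k with hg
  have hgs : ∀ k, g (k + 1) = T (g k + h) := fun k => rfl
  have hg_nonneg : ∀ k, 0 ≤ g k := by
    intro k
    induction k with
    | zero => exact hT1 0
    | succ k ih =>
      rw [hgs]
      exact le_trans (by linarith) (hT1 (g k + h))
  have hg_step : ∀ k, g k + h ≤ g (k + 1) := fun k => by rw [hgs]; exact hT1 _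
  have hpg : ∀ k, ε ≤ p (g k) i0 := by
    intro k
    cases k with
    | zero => exact hpT 0 le_rfl
    | succ k =>
      rw [hgs]
      exact hpT _ (by linarith [hg_nonneg k])
  have hmain : ∀ k : ℕ, Φ (g k + h) ≤ Φ (g 0) - (k + 1) * η := by
    intro k
    induction k with
    | zero =>
      have := hdrop (g 0) (hg_nonneg 0) (hpg 0)
      push_cast
      linarith
    | succ k ih =>
      have h1 : Φ (g (k + 1) + h) ≤ Φ (g (k + 1)) - η := hdrop (g (k+1)) (hg_nonneg (k+1)) (hpg (k+1))
      have h2 : Φ (g (k + 1)) ≤ Φ (g k + h) :=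
        hΦmono _ _ (by linarith [hg_nonneg k]) (hg_step k)
      push_cast
      push_cast at ih
      linarith
  obtain ⟨kk, hkk⟩ := exists_nat_gt ((Φ (g 0) + K) / η)
  have h1 : Φ (g kk + h) ≤ Φ (g 0) - (kk + 1) * η := hmain kk
  have h2 : -K ≤ Φ (g kk + h) := hΦlow _ (by linarith [hg_nonneg kk])
  have h3 : Φ (g 0) + K < kk * η := (div_lt_iff₀ hηpos).mp hkk
  nlinarith
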